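/- Read's space ℛ = (c₀, |||·|||) is weakly locally uniformly rotund: if x and a sequence (y_m) lie in the unit sphere of ℛ and |||x + y_m||| → 2, then (y_m) converges weakly to x. -/

import Mathlib

open Filter Topology NormedSpace

/-- The sup norm of a real sequence. -/
noncomputable def supNorm (x : ℕ → ℝ) : ℝ := ⨆ k, |x k|

/-- The duality pairing `⟨x, v⟩ = ∑ₖ x k * v k`. -/
noncomputable def pairing (x v : ℕ → ℝ) : ℝ := ∑' k, x k * v k

/-- Read's norm `|||x||| = ‖x‖_∞ + ∑ₙ rₙ |⟨x, vₙ⟩|`. -/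
noncomputable def readNorm (r : ℕ → ℝ) (v : ℕ → ℕ → ℝ) (x : ℕ → ℝ) : ℝ :=
  supNorm x + ∑' n, r n * |pairing x (v n)|

lemma supNorm_nonneg (f : ℕ → ℝ) : 0 ≤ supNorm f :=
  Real.iSup_nonneg fun k => abs_nonneg _

lemma supNorm_le {f : ℕ → ℝ} {C : ℝ} (hC : 0 ≤ C) (h : ∀ k, |f k| ≤ C) : supNorm f ≤ C :=
  Real.iSup_le h hC

lemma bdd_of_c0 {f : ℕ → ℝ} (hf : Tendsto f atTop (𝓝 0)) :
    BddAbove (Set.range fun k => |f k|) := by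
  have : Tendsto (fun k => |f k|) atTop (𝓝 |(0:ℝ)|) := hf.abs
  exact this.bddAbove_range

lemma abs_le_supNorm {f : ℕ → ℝ} (hf : BddAbove (Set.range fun k => |f k|)) (k : ℕ) :
    |f k| ≤ supNorm f := le_ciSup hf k

lemma summable_mul_of_bdd {f w : ℕ → ℝ} {C : ℝ} (h : ∀ k, |f k| ≤ C)
    (hw : Summable fun k => |w k|) : Summable fun k => f k * w k := by
  have hC : 0 ≤ C := le_trans (abs_nonneg _) (h 0)
  refine Summable.of_abs (Summable.of_nonneg_of_le (fun k => abs_nonneg _) (fun k => ?_)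
    (hw.mul_left C))
  rw [abs_mul]
  exact mul_le_mul_of_nonneg_right (h k) (abs_nonneg _)

lemma pairing_abs_le {f w : ℕ → ℝ} {C : ℝ} (h : ∀ k, |f k| ≤ C)
    (hw : Summable fun k => |w k|) : |pairing f w| ≤ C * ∑' k, |w k| := by
  have hC : 0 ≤ C := le_trans (abs_nonneg _) (h 0)
  have hs : Summable fun k => |f k * w k| := (summable_mul_of_bdd h hw).abs
  have h1 : ‖∑' k, f k * w k‖ ≤ ∑' k, ‖f k * w k‖ :=
    norm_tsum_le_tsum_norm (by simpa [Real.norm_eq_abs, abs_mul] using hs)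
  simp only [Real.norm_eq_abs] at h1
  refine h1.trans ?_
  rw [← tsum_mul_left]
  refine Summable.tsum_le_tsum (fun k => ?_) hs (hw.mul_left C)
  rw [abs_mul]
  exact mul_le_mul_of_nonneg_right (h k) (abs_nonneg _)

lemma pairing_add_left {f g w : ℕ → ℝ} (hf : Summable fun k => f k * w k)
    (hg : Summable fun k => g k * w k) :
    pairing (f + g) w = pairing f w + pairing g w := by
  unfold pairing
  rw [← Summable.tsum_add hf hg]
  congr 1; ext k; simp [add_mul]

lemma pairing_sub_left {f g w : ℕ → ℝ} (hf : Summable fun k => f k * w k)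
    (hg : Summable fun k => g k * w k) :
    pairing (f - g) w = pairing f w - pairing g w := by
  unfold pairing
  rw [← Summable.tsum_sub hf hg]
  congr 1; ext k; simp [sub_mul]

lemma pairing_sub_right {f w w' : ℕ → ℝ} (hw : Summable fun k => f k * w k)
    (hw' : Summable fun k => f k * w' k) :
    pairing f (w - w') = pairing f w - pairing f w' := by
  unfold pairing
  rw [← Summable.tsum_sub hw hw']
  congr 1; ext k; simp [mul_sub]

lemma pairing_smul_left (c : ℝ) (f w : ℕ → ℝ) :
    pairing (fun k => c * f k) w = c * pairing f w := by
  unfold pairing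
  rw [← tsum_mul_left]
  congr 1; ext k; ring


lemma pairing_abs_le' {f w : ℕ → ℝ} (hs : Summable fun k => |f k| * |w k|) :
    |pairing f w| ≤ ∑' k, |f k| * |w k| := by
  have h1 : ‖∑' k, f k * w k‖ ≤ ∑' k, ‖f k * w k‖ :=
    norm_tsum_le_tsum_norm (by simpa [Real.norm_eq_abs, abs_mul] using hs)
  simpa [Real.norm_eq_abs, abs_mul, pairing] using h1

lemma summable_read {r : ℕ → ℝ} {v : ℕ → ℕ → ℝ} {f : ℕ → ℝ} {C : ℝ}
    (hr0 : ∀ n, 0 ≤ r n) (hrsum : Summable r)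
    (hf : ∀ k, |f k| ≤ C) (hv1 : ∀ n, Summable fun k => |v n k|)
    (hv2 : ∀ n, ∑' k, |v n k| = 1) :
    Summable fun n => r n * |pairing f (v n)| := by
  refine Summable.of_nonneg_of_le (fun n => mul_nonneg (hr0 n) (abs_nonneg _))
    (fun n => ?_) (hrsum.mul_right C)
  have := pairing_abs_le hf (hv1 n)
  rw [hv2 n, mul_one] at this
  exact mul_le_mul_of_nonneg_left this (hr0 n)

lemma readNorm_le_three {r : ℕ → ℝ} {v : ℕ → ℕ → ℝ} {f : ℕ → ℝ}
    (hr0 : ∀ n, 0 ≤ r n) (hrsum : Summable r) (hr2 : ∑' n, r n ≤ 2)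
    (hf : ∀ k, |f k| ≤ supNorm f) (hv1 : ∀ n, Summable fun k => |v n k|)
    (hv2 : ∀ n, ∑' k, |v n k| = 1) :
    readNorm r v f ≤ 3 * supNorm f := by
  have hC : 0 ≤ supNorm f := supNorm_nonneg f
  have h1 : ∑' n, r n * |pairing f (v n)| ≤ ∑' n, r n * supNorm f := by
    refine Summable.tsum_le_tsum (fun n => ?_) (summable_read hr0 hrsum hf hv1 hv2)
      (hrsum.mul_right _)
    have := pairing_abs_le hf (hv1 n)
    rw [hv2 n, mul_one] at this
    exact mul_le_mul_of_nonneg_left this (hr0 n)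
  have h2 : ∑' n, r n * supNorm f = (∑' n, r n) * supNorm f := tsum_mul_right
  unfold readNorm
  nlinarith [hC]

lemma supNorm_le_readNorm {r : ℕ → ℝ} {v : ℕ → ℕ → ℝ} {f : ℕ → ℝ}
    (hr0 : ∀ n, 0 ≤ r n) : supNorm f ≤ readNorm r v f := by
  unfold readNorm
  have : 0 ≤ ∑' n, r n * |pairing f (v n)| :=
    tsum_nonneg fun n => mul_nonneg (hr0 n) (abs_nonneg _)
  linarith

lemma dual_repr
    (r : ℕ → ℝ) (hrpos : ∀ n, 0 < r n) (hrsum : Summable r) (hr2 : ∑' n, r n ≤ 2)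
    (v : ℕ → ℕ → ℝ) (hv1 : ∀ n, Summable fun k => |v n k|)
    (hv2 : ∀ n, ∑' k, |v n k| = 1)
    (X : Type*) [NormedAddCommGroup X] [NormedSpace ℝ X]
    (e : X →ₗ[ℝ] (ℕ → ℝ)) (hinj : Function.Injective e)
    (hc0 : ∀ x, Tendsto (e x) atTop (𝓝 0))
    (hsurj : ∀ f : ℕ → ℝ, Tendsto f atTop (𝓝 0) → ∃ x, e x = f)
    (hnorm : ∀ x, ‖x‖ = readNorm r v (e x))
    (f : StrongDual ℝ X) :
    ∃ w : ℕ → ℝ, (Summable fun k => |w k|) ∧ ∀ u : X, f u = ∑' k, e u k * w k := by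
  classical
  have hr0 : ∀ n, 0 ≤ r n := fun n => (hrpos n).le
  -- the coordinate vectors
  have hsingle : ∀ k : ℕ, Tendsto (Pi.single k (1:ℝ)) atTop (𝓝 0) := by
    intro k
    refine tendsto_const_nhds.congr' ?_
    filter_upwards [eventually_gt_atTop k] with j hj
    simp [Pi.single_apply, hj.ne']
  set δ : ℕ → X := fun k => Classical.choose (hsurj _ (hsingle k)) with hδ
  have heδ : ∀ k, e (δ k) = Pi.single k (1:ℝ) := fun k =>
    Classical.choose_spec (hsurj _ (hsingle k))
  set w : ℕ → ℝ := fun k => f (δ k) with hw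
  -- e of a finite combination of δ's
  have hcomb : ∀ (c : ℕ → ℝ) (N : ℕ),
      e (∑ k ∈ Finset.range N, c k • δ k) = fun j => if j < N then c j else 0 := by
    intro c N
    rw [map_sum]
    funext j
    have hterm : ∀ k, e (c k • δ k) = fun j' => c k * (Pi.single k 1 : ℕ → ℝ) j' := by
      intro k; funext j'; rw [map_smul, heδ]; simp
    simp only [Finset.sum_apply, hterm, Pi.single_apply, mul_ite, mul_one, mul_zero]
    rw [Finset.sum_ite_eq (Finset.range N) j c]
    simp [Finset.mem_range]
  -- summability of |w|
  have hwsum : Summable fun k => |w k| := by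
    refine summable_of_sum_range_le (c := 3 * ‖f‖) (fun k => abs_nonneg _) (fun N => ?_)
    set s : ℕ → ℝ := fun k => if w k < 0 then -1 else 1 with hs
    set g : X := ∑ k ∈ Finset.range N, s k • δ k with hg
    have heg : e g = fun j => if j < N then s j else 0 := hcomb s N
    have hsup : supNorm (e g) ≤ 1 := by
      refine supNorm_le one_pos.le (fun j => ?_)
      rw [heg]
      dsimp only
      split_ifs
      · simp only [hs]; split_ifs <;> norm_num
      · simp
    have hbd : ∀ j, |(e g) j| ≤ supNorm (e g) :=
      abs_le_supNorm (bdd_of_c0 (hc0 g))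
    have hng : ‖g‖ ≤ 3 := by
      rw [hnorm g]
      calc readNorm r v (e g) ≤ 3 * supNorm (e g) :=
            readNorm_le_three hr0 hrsum hr2 hbd hv1 hv2
        _ ≤ 3 * 1 := by linarith
        _ = 3 := by norm_num
    have hfg : f g = ∑ k ∈ Finset.range N, |w k| := by
      rw [hg, map_sum]
      refine Finset.sum_congr rfl (fun k _ => ?_)
      rw [map_smul]
      simp only [smul_eq_mul, hs]
      rcases lt_or_ge (w k) 0 with h | h
      · simp [if_pos h, abs_of_neg h, ← hw]; rfl
      · simp [if_neg (not_lt.2 h), abs_of_nonneg h, ← hw]; rfl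
    calc ∑ k ∈ Finset.range N, |w k| = f g := hfg.symm
      _ ≤ ‖f g‖ := le_abs_self _
      _ ≤ ‖f‖ * ‖g‖ := f.le_opNorm g
      _ ≤ ‖f‖ * 3 := by
          exact mul_le_mul_of_nonneg_left hng (norm_nonneg f)
      _ = 3 * ‖f‖ := by ring
  refine ⟨w, hwsum, fun u => ?_⟩
  -- truncations
  set C : ℝ := supNorm (e u) with hC
  have hbu : ∀ k, |e u k| ≤ C := abs_le_supNorm (bdd_of_c0 (hc0 u))
  have hC0 : 0 ≤ C := supNorm_nonneg _
  set t : ℕ → X := fun N => ∑ k ∈ Finset.range N, (e u k) • δ k with ht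
  have hft : ∀ N, f (t N) = ∑ k ∈ Finset.range N, e u k * w k := by
    intro N
    rw [ht, map_sum]
    exact Finset.sum_congr rfl fun k _ => by rw [map_smul]; simp; exact Or.inl rfl
  have het : ∀ N, e (u - t N) = fun j => if j < N then 0 else e u j := by
    intro N
    rw [map_sub, hcomb]
    funext j
    by_cases h : j < N <;> simp [h]
  have htail : ∀ N j, |e (u - t N) j| ≤ C := by
    intro N j
    rw [het N]
    dsimp only
    split_ifs
    · simpa using hC0
    · exact hbu j
  -- the tail norm tends to zero
  have hsuptail : Tendsto (fun N => supNorm (e (u - t N))) atTop (𝓝 0) := by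
    rw [Metric.tendsto_atTop]
    intro ε hε
    have : ∀ᶠ j in atTop, |e u j| < ε / 2 := by
      have := (hc0 u).abs
      simp only [abs_zero] at this
      exact this.eventually (gt_mem_nhds (by linarith))
    obtain ⟨K, hK⟩ := this.exists_forall_of_atTop
    refine ⟨K, fun N hN => ?_⟩
    have h1 : supNorm (e (u - t N)) ≤ ε / 2 := by
      refine supNorm_le (by linarith) (fun j => ?_)
      rw [het N]
      dsimp only
      split_ifs with h
      · simp; linarith
      · exact (hK j (le_trans hN (not_lt.1 h))).le
    have h2 : 0 ≤ supNorm (e (u - t N)) := supNorm_nonneg _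
    rw [Real.dist_eq]
    rw [abs_of_nonneg (by linarith)]
    linarith
  have hseriestail :
      Tendsto (fun N => ∑' n, r n * |pairing (e (u - t N)) (v n)|) atTop (𝓝 0) := by
    have h0 : (0:ℝ) = ∑' n : ℕ, (0:ℝ) := by simp
    rw [h0]
    refine tendsto_tsum_of_dominated_convergence (bound := fun n => r n * C)
      (hrsum.mul_right C) (fun n => ?_) ?_
    · -- pointwise convergence to 0
      have hq : Tendsto (fun N => ∑' j, (if j < N then 0 else |v n j|)) atTop (𝓝 0) := by
        have hsplit : ∀ N, (∑' j, (if j < N then 0 else |v n j|))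
            = (∑' j, |v n j|) - ∑ j ∈ Finset.range N, |v n j| := by
          intro N
          have hs1 : Summable fun j => if j < N then |v n j| else 0 :=
            (hv1 n).of_nonneg_of_le (fun j => by positivity)
              (fun j => by split_ifs <;> simp [abs_nonneg])
          have hs2 : Summable fun j => if j < N then 0 else |v n j| :=
            (hv1 n).of_nonneg_of_le (fun j => by positivity)
              (fun j => by split_ifs <;> simp [abs_nonneg])
          have hadd : (∑' j, |v n j|)
              = (∑' j, (if j < N then |v n j| else 0)) + ∑' j, (if j < N then 0 else |v n j|) := by
            rw [← Summable.tsum_add hs1 hs2]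
            congr 1; funext j; split_ifs <;> simp
          have hfin : (∑' j, (if j < N then |v n j| else 0))
              = ∑ j ∈ Finset.range N, |v n j| := by
            rw [tsum_eq_sum (s := Finset.range N)]
            · exact Finset.sum_congr rfl fun j hj => if_pos (Finset.mem_range.1 hj)
            · intro j hj
              exact if_neg (by simpa [Finset.mem_range] using hj)
          rw [hadd, hfin]; ring
        simp only [hsplit]
        have := ((hv1 n).hasSum.tendsto_sum_nat)
        have h2 := (tendsto_const_nhds (x := ∑' j, |v n j|) (f := atTop (α := ℕ))).sub this
        simpa using h2
      -- squeeze
      have hb : ∀ N, |pairing (e (u - t N)) (v n)|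
          ≤ C * ∑' j, (if j < N then 0 else |v n j|) := by
        intro N
        have hsum1 : Summable fun j => |e (u - t N) j| * |v n j| := by
          refine Summable.of_nonneg_of_le (fun j => by positivity) (fun j => ?_)
            ((hv1 n).mul_left C)
          exact mul_le_mul_of_nonneg_right (htail N j) (abs_nonneg _)
        refine (pairing_abs_le' hsum1).trans ?_
        rw [← tsum_mul_left]
        refine Summable.tsum_le_tsum (fun j => ?_) hsum1 ?_
        · rw [het N]
          dsimp only
          split_ifs with h
          · simp
          · exact mul_le_mul_of_nonneg_right (hbu j) (abs_nonneg _)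
        · refine Summable.mul_left C ?_
          exact (hv1 n).of_nonneg_of_le (fun j => by positivity)
            (fun j => by split_ifs <;> simp [abs_nonneg])
      have hCq : Tendsto (fun N => C * ∑' j, (if j < N then 0 else |v n j|)) atTop (𝓝 0) := by
        have := hq.const_mul C
        simpa using this
      have habs : Tendsto (fun N => |pairing (e (u - t N)) (v n)|) atTop (𝓝 0) :=
        squeeze_zero (fun N => abs_nonneg _) hb hCq
      have := habs.const_mul (r n)
      simpa using this
    · filter_upwards with N n
      have h1 := pairing_abs_le (htail N) (hv1 n)
      rw [hv2 n, mul_one] at h1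
      rw [Real.norm_eq_abs, abs_mul, abs_of_nonneg (hr0 n), abs_abs]
      exact mul_le_mul_of_nonneg_left h1 (hr0 n)
  have hnormtail : Tendsto (fun N => ‖u - t N‖) atTop (𝓝 0) := by
    have : ∀ N, ‖u - t N‖ = supNorm (e (u - t N))
        + ∑' n, r n * |pairing (e (u - t N)) (v n)| := fun N => hnorm _
    simp only [this]
    simpa using hsuptail.add hseriestail
  -- conclusion
  have hft2 : Tendsto (fun N => f (t N)) atTop (𝓝 (f u)) := by
    have h1 : Tendsto (fun N => f u - f (t N)) atTop (𝓝 0) := by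
      have hb : ∀ N, ‖f u - f (t N)‖ ≤ ‖f‖ * ‖u - t N‖ := by
        intro N
        rw [← map_sub]
        exact f.le_opNorm _
      refine squeeze_zero_norm hb ?_
      have := hnormtail.const_mul ‖f‖
      simpa using this
    have := (tendsto_const_nhds (x := f u) (f := atTop (α := ℕ))).sub h1
    simpa using this
  have hsummable : Summable fun k => e u k * w k := summable_mul_of_bdd hbu hwsum
  have hps : Tendsto (fun N => ∑ k ∈ Finset.range N, e u k * w k) atTop
      (𝓝 (∑' k, e u k * w k)) := hsummable.hasSum.tendsto_sum_nat
  have := hft2.congr (fun N => hft N)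
  exact tendsto_nhds_unique this hps

lemma mul_nonneg_of_abs_add_eq {a b : ℝ} (h : |a + b| = |a| + |b|) : 0 ≤ a * b := by
  have h2 : (a + b)^2 = (|a| + |b|)^2 := by rw [← h, sq_abs]
  nlinarith [sq_abs a, sq_abs b, abs_mul a b, le_abs_self (a * b), abs_nonneg a, abs_nonneg b]

lemma pairing_single (f : ℕ → ℝ) (j : ℕ) : pairing f (Pi.single j 1) = f j := by
  unfold pairing
  rw [tsum_eq_single j]
  · simp
  · intro b hb; simp [Pi.single_apply, hb]

lemma summable_abs_single (j : ℕ) : Summable fun i => |Pi.single j (1:ℝ) i| := by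
  refine summable_of_ne_finset_zero (s := {j}) (fun b hb => ?_)
  simp only [Finset.mem_singleton] at hb
  simp [Pi.single_apply, hb]

lemma tsum_abs_single (j : ℕ) : ∑' i, |Pi.single j (1:ℝ) i| = 1 := by
  rw [tsum_eq_single j]
  · simp
  · intro b hb; simp [Pi.single_apply, hb]

lemma pairing_base (f : ℕ → ℝ) {j k : ℕ} (hjk : j ≠ k) (t : ℝ) :
    pairing f (fun i => if i = j then t else if i = k then 1 else 0) = t * f j + f k := by
  unfold pairing
  rw [tsum_eq_sum (s := {j, k}) (fun b hb => ?_)]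
  · rw [Finset.sum_pair hjk]
    simp [hjk.symm]
    ring
  · simp only [Finset.mem_insert, Finset.mem_singleton, not_or] at hb
    simp [hb.1, hb.2]

lemma summable_abs_base {j k : ℕ} (t : ℝ) :
    Summable fun i => |(fun i => if i = j then t else if i = k then 1 else 0) i| := by
  refine summable_of_ne_finset_zero (s := {j, k}) (fun b hb => ?_)
  simp only [Finset.mem_insert, Finset.mem_singleton, not_or] at hb
  simp [hb.1, hb.2]

lemma tsum_abs_base {j k : ℕ} (hjk : j ≠ k) (t : ℝ) :
    ∑' i, |(fun i => if i = j then t else if i = k then 1 else 0) i| = |t| + 1 := by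
  rw [tsum_eq_sum (s := {j, k}) (fun b hb => ?_)]
  · rw [Finset.sum_pair hjk]
    simp [hjk.symm]
  · simp only [Finset.mem_insert, Finset.mem_singleton, not_or] at hb
    simp [hb.1, hb.2]

lemma pairing_div (f w : ℕ → ℝ) (d : ℝ) :
    pairing f (fun i => w i / d) = pairing f w / d := by
  unfold pairing
  simp only [div_eq_mul_inv, ← mul_assoc]
  exact tsum_mul_right

set_option maxHeartbeats 2000000 in
lemma weak_key
    (r : ℕ → ℝ) (hrpos : ∀ n, 0 < r n) (hrsum : Summable r) (hr2 : ∑' n, r n ≤ 2)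
    (v : ℕ → ℕ → ℝ) (hv1 : ∀ n, Summable fun k => |v n k|)
    (hv2 : ∀ n, ∑' k, |v n k| = 1)
    (hdense : ∀ w : ℕ → ℝ, (Summable fun k => |w k|) → ∑' k, |w k| = 1 →
      ∀ ε > 0, ∃ n, ∑' k, |w k - v n k| < ε)
    (X : Type*) [NormedAddCommGroup X] [NormedSpace ℝ X]
    (e : X →ₗ[ℝ] (ℕ → ℝ))
    (hc0 : ∀ x, Tendsto (e x) atTop (𝓝 0))
    (hnorm : ∀ x, ‖x‖ = readNorm r v (e x))
    (x : X) (hx : ‖x‖ = 1) (y : ℕ → X) (hy : ∀ m, ‖y m‖ = 1)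
    (hsum : Tendsto (fun m => ‖x + y m‖) atTop (𝓝 2))
    (w : ℕ → ℝ) (hwsum : Summable fun k => |w k|) :
    Tendsto (fun m => ∑' k, e (y m) k * w k) atTop (𝓝 (∑' k, e x k * w k)) := by
  have hr0 : ∀ n, 0 ≤ r n := fun n => (hrpos n).le
  -- uniform bounds
  have hbx : ∀ k, |e x k| ≤ supNorm (e x) := abs_le_supNorm (bdd_of_c0 (hc0 x))
  have hsupx_le : supNorm (e x) ≤ 1 := by
    have := supNorm_le_readNorm (r := r) (v := v) (f := e x) hr0
    rw [← hnorm x, hx] at this; exact this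
  have hbx1 : ∀ k, |e x k| ≤ 1 := fun k => (hbx k).trans hsupx_le
  have hby1 : ∀ m k, |e (y m) k| ≤ 1 := by
    intro m k
    have h1 : supNorm (e (y m)) ≤ 1 := by
      have := supNorm_le_readNorm (r := r) (v := v) (f := e (y m)) hr0
      rw [← hnorm (y m), hy m] at this; exact this
    exact (abs_le_supNorm (bdd_of_c0 (hc0 (y m))) k).trans h1
  -- basic constants
  set a : ℕ → ℝ := fun n => pairing (e x) (v n) with ha
  set S : ℝ := ∑' n, r n * |a n| with hS
  have hxsplit : supNorm (e x) + S = 1 := by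
    have := hnorm x
    rw [hx] at this
    exact this.symm
  have hsup3 : 1 ≤ 3 * supNorm (e x) := by
    have h := readNorm_le_three (r := r) (v := v) hr0 hrsum hr2 hbx hv1 hv2
    rw [← hnorm x, hx] at h; exact h
  have hS23 : S ≤ 2/3 := by linarith
  have hsupx13 : 1/3 ≤ supNorm (e x) := by linarith
  have hSnonneg : 0 ≤ S := tsum_nonneg fun n => mul_nonneg (hr0 n) (abs_nonneg _)
  have Sa : Summable fun n => r n * |a n| := summable_read hr0 hrsum hbx1 hv1 hv2
  -- subsequence principle
  refine tendsto_of_subseq_tendsto (fun ns hns => ?_)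
  have hK : IsCompact (Set.pi Set.univ fun _ : ℕ => Set.Icc (-1:ℝ) 1) :=
    isCompact_univ_pi fun _ => isCompact_Icc
  have hmem : ∀ m, (e (y (ns m)) : ℕ → ℝ) ∈ Set.pi Set.univ fun _ : ℕ => Set.Icc (-1:ℝ) 1 :=
    fun m k _ => abs_le.1 (hby1 (ns m) k)
  obtain ⟨z, hzK, ms, hms, hzlim0⟩ := hK.tendsto_subseq hmem
  refine ⟨ms, ?_⟩
  set u : ℕ → X := fun m => y (ns (ms m)) with hu
  have hzlim : ∀ k, Tendsto (fun m => e (u m) k) atTop (𝓝 (z k)) :=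
    fun k => tendsto_pi_nhds.1 hzlim0 k
  have hz1 : ∀ k, |z k| ≤ 1 := fun k => abs_le.2 (hzK k (Set.mem_univ k))
  have hcomp : Tendsto (fun m => ns (ms m)) atTop atTop := hns.comp hms.tendsto_atTop
  have hsum2 : Tendsto (fun m => ‖x + u m‖) atTop (𝓝 2) := hsum.comp hcomp
  have hbu1 : ∀ m k, |e (u m) k| ≤ 1 := fun m k => hby1 (ns (ms m)) k
  have hbu : ∀ m k, |e (u m) k| ≤ supNorm (e (u m)) :=
    fun m => abs_le_supNorm (bdd_of_c0 (hc0 (u m)))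
  -- pairings
  set b : ℕ → ℕ → ℝ := fun n m => pairing (e (u m)) (v n) with hb
  set c : ℕ → ℝ := fun n => pairing z (v n) with hc
  have Sb : ∀ m, Summable fun n => r n * |b n m| :=
    fun m => summable_read hr0 hrsum (hbu1 m) hv1 hv2
  have hxu : ∀ m, e (x + u m) = fun k => e x k + e (u m) k := by
    intro m; funext k; rw [map_add]; rfl
  have hbxu : ∀ m k, |e x k + e (u m) k| ≤ 2 := by
    intro m k
    calc |e x k + e (u m) k| ≤ |e x k| + |e (u m) k| := abs_add_le _ _
      _ ≤ 2 := by have := hbx1 k; have := hbu1 m k; linarith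
  have hpxu : ∀ m n, pairing (fun k => e x k + e (u m) k) (v n) = a n + b n m := by
    intro m n
    have h1 : (fun k => e x k + e (u m) k) = (e x) + (e (u m)) := by funext k; rfl
    rw [h1, pairing_add_left (summable_mul_of_bdd hbx1 (hv1 n))
      (summable_mul_of_bdd (hbu1 m) (hv1 n))]
  have Sab : ∀ m, Summable fun n => r n * |a n + b n m| := by
    intro m
    have := summable_read (f := fun k => e x k + e (u m) k) hr0 hrsum (hbxu m) hv1 hv2
    refine this.congr fun n => ?_
    rw [hpxu m n]
  -- norm split for x + u m
  have hnormsplit : ∀ m, ‖x + u m‖ = supNorm (fun k => e x k + e (u m) k)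
      + ∑' n, r n * |a n + b n m| := by
    intro m
    rw [hnorm (x + u m), hxu m]
    unfold readNorm
    congr 1
    exact tsum_congr fun n => by rw [hpxu m n]
  have husplit : ∀ m, supNorm (e (u m)) + ∑' n, r n * |b n m| = 1 := by
    intro m
    have := hnorm (u m)
    rw [hy (ns (ms m))] at this
    exact this.symm
  -- defect decomposition
  have hsubadd : ∀ m, supNorm (fun k => e x k + e (u m) k)
      ≤ supNorm (e x) + supNorm (e (u m)) := by
    intro m
    refine supNorm_le (add_nonneg (supNorm_nonneg _) (supNorm_nonneg _)) (fun k => ?_)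
    exact (abs_add_le _ _).trans (add_le_add (hbx k) (hbu m k))
  -- the defect identity
  have hbabs1 : ∀ m n, |b n m| ≤ 1 := by
    intro m n
    have h := pairing_abs_le (hbu1 m) (hv1 n)
    rw [hv2 n, mul_one] at h
    exact h
  have haabs1 : ∀ n, |a n| ≤ 1 := by
    intro n
    have h := pairing_abs_le hbx1 (hv1 n)
    rw [hv2 n, mul_one] at h
    exact h
  have Sdef : ∀ m, Summable fun n => r n * (|a n| + |b n m| - |a n + b n m|) := by
    intro m
    have h1 : (fun n => r n * (|a n| + |b n m| - |a n + b n m|))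
        = fun n => (r n * |a n| + r n * |b n m|) - r n * |a n + b n m| := by
      funext n; ring
    rw [h1]
    exact (Sa.add (Sb m)).sub (Sab m)
  have hdefsum : ∀ m, ∑' n, r n * (|a n| + |b n m| - |a n + b n m|)
      = S + (∑' n, r n * |b n m|) - ∑' n, r n * |a n + b n m| := by
    intro m
    have h1 : (fun n => r n * (|a n| + |b n m| - |a n + b n m|))
        = fun n => (r n * |a n| + r n * |b n m|) - r n * |a n + b n m| := by
      funext n; ring
    rw [h1, Summable.tsum_sub (Sa.add (Sb m)) (Sab m), Summable.tsum_add Sa (Sb m)]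
  have hkey : ∀ m, (supNorm (e x) + supNorm (e (u m)) - supNorm (fun k => e x k + e (u m) k))
      + ∑' n, r n * (|a n| + |b n m| - |a n + b n m|) = 2 - ‖x + u m‖ := by
    intro m
    rw [hdefsum m]
    have h1 := hnormsplit m
    have h2 := husplit m
    linarith
  have hdefect_nonneg : ∀ m n, 0 ≤ r n * (|a n| + |b n m| - |a n + b n m|) := by
    intro m n
    have := abs_add_le (a n) (b n m)
    have := hr0 n
    nlinarith
  have hT_nonneg : ∀ m, 0 ≤ supNorm (e x) + supNorm (e (u m))
      - supNorm (fun k => e x k + e (u m) k) := fun m => by linarith [hsubadd m]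
  have hDlim : Tendsto (fun m => 2 - ‖x + u m‖) atTop (𝓝 0) := by
    have := (tendsto_const_nhds (x := (2:ℝ)) (f := atTop (α := ℕ))).sub hsum2
    simpa using this
  -- each defect term tends to zero
  have hdef_le : ∀ m n, r n * (|a n| + |b n m| - |a n + b n m|) ≤ 2 - ‖x + u m‖ := by
    intro m n
    have h1 : r n * (|a n| + |b n m| - |a n + b n m|)
        ≤ ∑' n', r n' * (|a n'| + |b n' m| - |a n' + b n' m|) :=
      Summable.le_tsum (Sdef m) n (fun n' _ => hdefect_nonneg m n')
    have h2 := hkey m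
    have h3 := hT_nonneg m
    linarith
  -- pointwise limits of pairings
  have hblim : ∀ n, Tendsto (fun m => b n m) atTop (𝓝 (c n)) := by
    intro n
    have : Tendsto (fun m => ∑' k, e (u m) k * v n k) atTop (𝓝 (∑' k, z k * v n k)) := by
      refine tendsto_tsum_of_dominated_convergence (bound := fun k => |v n k|) (hv1 n)
        (fun k => (hzlim k).mul_const (v n k)) ?_
      filter_upwards with m k
      rw [Real.norm_eq_abs, abs_mul]
      calc |e (u m) k| * |v n k| ≤ 1 * |v n k| :=
            mul_le_mul_of_nonneg_right (hbu1 m k) (abs_nonneg _)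
        _ = |v n k| := one_mul _
    exact this
  -- limit defect vanishes on each v n
  have hvn : ∀ n, |a n + c n| = |a n| + |c n| := by
    intro n
    have hlim1 : Tendsto (fun m => |a n| + |b n m| - |a n + b n m|) atTop
        (𝓝 (|a n| + |c n| - |a n + c n|)) := by
      have h1 : Tendsto (fun m => |b n m|) atTop (𝓝 |c n|) := (hblim n).abs
      have h2 : Tendsto (fun m => |a n + b n m|) atTop (𝓝 |a n + c n|) :=
        ((hblim n).const_add (a n)).abs
      simpa using (h1.const_add (|a n|)).sub h2
    have hub : Tendsto (fun m => (r n)⁻¹ * (2 - ‖x + u m‖)) atTop (𝓝 0) := by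
      simpa using hDlim.const_mul (r n)⁻¹
    have hle : |a n| + |c n| - |a n + c n| ≤ 0 := by
      refine le_of_tendsto_of_tendsto' hlim1 hub (fun m => ?_)
      rw [inv_mul_eq_div, le_div_iff₀ (hrpos n), mul_comm]
      exact hdef_le m n
    have := abs_add_le (a n) (c n)
    linarith
  -- the limit defect vanishes for every unit vector of ℓ¹
  have hdef : ∀ w' : ℕ → ℝ, (Summable fun k => |w' k|) → (∑' k, |w' k|) = 1 →
      |pairing (e x) w' + pairing z w'| = |pairing (e x) w'| + |pairing z w'| := by
    intro w' hw's hw'1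
    have hz1' : ∀ k, |z k| ≤ 1 := hz1
    have key : ∀ ε > 0, |pairing (e x) w'| + |pairing z w'|
        - |pairing (e x) w' + pairing z w'| ≤ 4 * ε := by
      intro ε hε
      obtain ⟨n, hn⟩ := hdense w' hw's hw'1 ε hε
      have hsub : Summable fun k => |w' k - v n k| :=
        Summable.of_nonneg_of_le (fun k => abs_nonneg _) (fun k => abs_sub _ _)
          (hw's.add (hv1 n))
      have lip : ∀ g : ℕ → ℝ, (∀ k, |g k| ≤ 1) →
          |pairing g w' - pairing g (v n)| ≤ ε := by
        intro g hg
        have h1 : pairing g w' - pairing g (v n) = pairing g (fun k => w' k - v n k) := by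
          have h2 : (fun k => w' k - v n k) = w' - v n := by funext k; rfl
          rw [h2, pairing_sub_right (summable_mul_of_bdd hg hw's)
            (summable_mul_of_bdd hg (hv1 n))]
        rw [h1]
        have h3 := pairing_abs_le hg hsub
        rw [one_mul] at h3
        exact h3.trans hn.le
      have hex := lip (e x) hbx1
      have hze := lip z hz1'
      have hvneq := hvn n
      set P := pairing (e x) w'
      set Q := pairing z w'
      set P' := pairing (e x) (v n)
      set Q' := pairing z (v n)
      have hPQ : |(P + Q) - (P' + Q')| ≤ 2 * ε := by
        calc |(P + Q) - (P' + Q')| = |(P - P') + (Q - Q')| := by ring_nf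
          _ ≤ |P - P'| + |Q - Q'| := abs_add_le _ _
          _ ≤ 2 * ε := by linarith
      have e1 : |P| - |P'| ≤ |P - P'| := abs_sub_abs_le_abs_sub _ _
      have e2 : |Q| - |Q'| ≤ |Q - Q'| := abs_sub_abs_le_abs_sub _ _
      have e3 : |P' + Q'| - |P + Q| ≤ |(P' + Q') - (P + Q)| := abs_sub_abs_le_abs_sub _ _
      have e4 : |(P' + Q') - (P + Q)| = |(P + Q) - (P' + Q')| := abs_sub_comm _ _
      have e5 : |P' + Q'| = |P'| + |Q'| := hvneq
      linarith
    have hd0 : |pairing (e x) w'| + |pairing z w'| - |pairing (e x) w' + pairing z w'| ≤ 0 := by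
      by_contra hcon
      push_neg at hcon
      have := key ((|pairing (e x) w'| + |pairing z w'|
        - |pairing (e x) w' + pairing z w'|) / 8) (by linarith)
      linarith
    have := abs_add_le (pairing (e x) w') (pairing z w')
    linarith
  -- pointwise sign agreement and proportionality
  have hsign : ∀ j, 0 ≤ e x j * z j := by
    intro j
    have h := hdef (Pi.single j 1) (summable_abs_single j) (tsum_abs_single j)
    rw [pairing_single, pairing_single] at h
    exact mul_nonneg_of_abs_add_eq h
  have hcross : ∀ j k, e x j * z k = e x k * z j := by
    intro j k
    by_cases hjk : j = k
    · subst hjk; rfl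
    · have hQ : ∀ t : ℝ, 0 ≤ (e x j * z j) * (t * t)
          + (e x j * z k + e x k * z j) * t + e x k * z k := by
        intro t
        set base : ℕ → ℝ := fun i => if i = j then t else if i = k then 1 else 0 with hbase
        have hd : (0:ℝ) < |t| + 1 := by positivity
        have habseq : ∀ i, |base i| * (|t| + 1)⁻¹ = |base i / (|t| + 1)| := by
          intro i
          rw [abs_div, abs_of_pos hd, div_eq_mul_inv]
        have hws : Summable fun i => |base i / (|t| + 1)| :=
          (((summable_abs_base (j := j) (k := k) t)).mul_right (|t| + 1)⁻¹).congr habseq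
        have h1 : ∑' i, |base i / (|t| + 1)| = 1 := by
          rw [tsum_congr (fun i => (habseq i).symm), tsum_mul_right,
            tsum_abs_base hjk t]
          field_simp
        have h := hdef (fun i => base i / (|t| + 1)) hws h1
        rw [pairing_div, pairing_div, pairing_base (e x) hjk, pairing_base z hjk,
          ← add_div, abs_div, abs_div, abs_div, abs_of_pos hd] at h
        have h2 : |(t * e x j + e x k) + (t * z j + z k)|
            = |t * e x j + e x k| + |t * z j + z k| := by
          have hne : (|t| + 1) ≠ 0 := hd.ne'
          rw [← add_div, div_eq_div_iff hne hne] at h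
          have := mul_right_cancel₀ hne h
          linarith [this]
        have h3 := mul_nonneg_of_abs_add_eq h2
        nlinarith [h3]
      have hdisc := discrim_le_zero hQ
      rw [discrim] at hdisc
      nlinarith [sq_nonneg (e x j * z k - e x k * z j), hdisc]
  have hj0 : ∃ j0, e x j0 ≠ 0 := by
    by_contra hcon
    push_neg at hcon
    have : supNorm (e x) ≤ 0 := supNorm_le le_rfl (fun k => by simp [hcon k])
    linarith
  obtain ⟨j0, hj0⟩ := hj0
  set lam : ℝ := z j0 / e x j0 with hlam
  have hzeq : ∀ k, z k = lam * e x k := by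
    intro k
    rw [hlam, div_mul_eq_mul_div, eq_div_iff hj0]
    linear_combination hcross j0 k
  have hlam0 : 0 ≤ lam := by
    have h1 : lam = (e x j0 * z j0) / (e x j0 ^ 2) := by
      rw [hlam]; field_simp
    rw [h1]
    exact div_nonneg (hsign j0) (sq_nonneg _)
  -- c n = lam * a n
  have hceq : ∀ n, c n = lam * a n := by
    intro n
    have h1 : z = fun k => lam * e x k := funext hzeq
    show pairing z (v n) = lam * a n
    rw [h1, pairing_smul_left]
  -- limit of the series part of the norms of u m
  have hLlim : Tendsto (fun m => ∑' n, r n * |b n m|) atTop (𝓝 (lam * S)) := by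
    have h1 : Tendsto (fun m => ∑' n, r n * |b n m|) atTop (𝓝 (∑' n, r n * |c n|)) := by
      refine tendsto_tsum_of_dominated_convergence (bound := r) hrsum
        (fun n => ((hblim n).abs.const_mul (r n))) ?_
      filter_upwards with m n
      rw [Real.norm_eq_abs, abs_mul, abs_of_nonneg (hr0 n), abs_abs]
      nlinarith [hr0 n, hbabs1 m n, abs_nonneg (b n m)]
    have h2 : (∑' n, r n * |c n|) = lam * S := by
      rw [hS, ← tsum_mul_left]
      refine tsum_congr fun n => ?_
      rw [hceq n, abs_mul, abs_of_nonneg hlam0]; ring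
    rwa [h2] at h1
  have hsuplim : Tendsto (fun m => supNorm (e (u m))) atTop (𝓝 (1 - lam * S)) := by
    have h1 : ∀ m, supNorm (e (u m)) = 1 - ∑' n, r n * |b n m| := fun m => by
      linarith [husplit m]
    simp only [h1]
    simpa using (tendsto_const_nhds (x := (1:ℝ)) (f := atTop (α := ℕ))).sub hLlim
  have hlamS : 0 ≤ 1 - lam * S :=
    le_of_tendsto_of_tendsto' tendsto_const_nhds hsuplim (fun m => supNorm_nonneg _)
  -- lam ≤ 1
  have hlamle1 : lam ≤ 1 := by
    by_contra hcon
    push_neg at hcon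
    have hzb : ∀ k, |z k| ≤ 1 - lam * S := fun k =>
      le_of_tendsto_of_tendsto' (hzlim k).abs hsuplim (fun m => hbu m k)
    have hxb : ∀ k, |e x k| ≤ (1 - lam * S) / lam := by
      intro k
      have h1 := hzb k
      rw [hzeq k, abs_mul, abs_of_nonneg hlam0] at h1
      rw [le_div_iff₀ (by linarith : (0:ℝ) < lam)]
      linarith [mul_comm lam (|e x k|)]
    have h2 : supNorm (e x) ≤ (1 - lam * S) / lam :=
      supNorm_le (div_nonneg hlamS (by linarith)) hxb
    rw [le_div_iff₀ (by linarith : (0:ℝ) < lam)] at h2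
    nlinarith [h2, hxsplit, hSnonneg]
  -- limit of the series part of the norm of x + u m
  have hablim : Tendsto (fun m => ∑' n, r n * |a n + b n m|) atTop
      (𝓝 ((1 + lam) * S)) := by
    have h1 : Tendsto (fun m => ∑' n, r n * |a n + b n m|) atTop
        (𝓝 (∑' n, r n * |a n + c n|)) := by
      refine tendsto_tsum_of_dominated_convergence (bound := fun n => r n * 2)
        (hrsum.mul_right 2) (fun n => (((hblim n).const_add (a n)).abs.const_mul (r n))) ?_
      filter_upwards with m n
      rw [Real.norm_eq_abs, abs_mul, abs_of_nonneg (hr0 n), abs_abs]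
      have h2 : |a n + b n m| ≤ 2 := by
        calc |a n + b n m| ≤ |a n| + |b n m| := abs_add_le _ _
          _ ≤ 2 := by linarith [haabs1 n, hbabs1 m n]
      exact mul_le_mul_of_nonneg_left h2 (hr0 n)
    have h2 : (∑' n, r n * |a n + c n|) = (1 + lam) * S := by
      rw [hS, ← tsum_mul_left]
      refine tsum_congr fun n => ?_
      rw [hceq n]
      have h3 : a n + lam * a n = (1 + lam) * a n := by ring
      rw [h3, abs_mul, abs_of_nonneg (by linarith : (0:ℝ) ≤ 1 + lam)]
      ring
    rwa [h2] at h1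
  have hsupsum : Tendsto (fun m => supNorm (fun k => e x k + e (u m) k)) atTop
      (𝓝 (2 - (1 + lam) * S)) := by
    have h1 : ∀ m, supNorm (fun k => e x k + e (u m) k)
        = ‖x + u m‖ - ∑' n, r n * |a n + b n m| := fun m => by linarith [hnormsplit m]
    simp only [h1]
    simpa using hsum2.sub hablim
  -- choose N with small x-tail
  have hNex : ∃ N, ∀ j, N ≤ j → |e x j| ≤ (1 - S) / 2 := by
    have h : Tendsto (fun j => |e x j|) atTop (𝓝 0) := by
      simpa using (hc0 x).abs
    have h2 : ∀ᶠ j in atTop, |e x j| < (1 - S) / 2 :=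
      h.eventually (gt_mem_nhds (by linarith : (0:ℝ) < (1 - S) / 2))
    obtain ⟨N, hN⟩ := h2.exists_forall_of_atTop
    exact ⟨N, fun j hj => (hN j hj).le⟩
  obtain ⟨N, hN⟩ := hNex
  set p : ℕ → ℝ := fun m => ∑ k ∈ Finset.range N, |e (u m) k - z k| with hp
  have hplim : Tendsto p atTop (𝓝 0) := by
    have h0 : (0:ℝ) = ∑ k ∈ Finset.range N, (0:ℝ) := by simp
    rw [hp, h0]
    refine tendsto_finset_sum _ (fun k _ => ?_)
    have := ((hzlim k).sub (tendsto_const_nhds (x := z k))).abs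
    simpa using this
  have hp0 : ∀ m, 0 ≤ p m := fun m => Finset.sum_nonneg fun k _ => abs_nonneg _
  have hineq : ∀ m, supNorm (fun k => e x k + e (u m) k)
      ≤ max ((1 + lam) * (1 - S) + p m) ((1 - S) / 2 + supNorm (e (u m))) := by
    intro m
    have hmax0 : 0 ≤ max ((1 + lam) * (1 - S) + p m) ((1 - S) / 2 + supNorm (e (u m))) := by
      refine le_trans ?_ (le_max_left _ _)
      have h1 : 0 ≤ (1 + lam) * (1 - S) := by nlinarith [hlam0, hS23]
      linarith [hp0 m]
    refine supNorm_le hmax0 (fun j => ?_)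
    by_cases hj : j < N
    · refine le_trans ?_ (le_max_left _ _)
      have h1 : |e x j + e (u m) j| ≤ |e x j + z j| + |e (u m) j - z j| := by
        have h0 : e x j + e (u m) j = (e x j + z j) + (e (u m) j - z j) := by ring
        rw [h0]; exact abs_add_le _ _
      have h2 : |e x j + z j| = (1 + lam) * |e x j| := by
        rw [hzeq j]
        have h0 : e x j + lam * e x j = (1 + lam) * e x j := by ring
        rw [h0, abs_mul, abs_of_nonneg (by linarith : (0:ℝ) ≤ 1 + lam)]
      have h3 : |e (u m) j - z j| ≤ p m := by
        rw [hp]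
        exact Finset.single_le_sum (f := fun k => |e (u m) k - z k|) (fun k _ => abs_nonneg _) (Finset.mem_range.2 hj)
      have h4 : |e x j| ≤ 1 - S := by linarith [hbx j]
      have h5 : (1 + lam) * |e x j| ≤ (1 + lam) * (1 - S) :=
        mul_le_mul_of_nonneg_left h4 (by linarith)
      linarith
    · refine le_trans ?_ (le_max_right _ _)
      push_neg at hj
      calc |e x j + e (u m) j| ≤ |e x j| + |e (u m) j| := abs_add_le _ _
        _ ≤ (1 - S) / 2 + supNorm (e (u m)) := add_le_add (hN j hj) (hbu m j)
  have hrhslim : Tendsto (fun m => max ((1 + lam) * (1 - S) + p m)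
      ((1 - S) / 2 + supNorm (e (u m)))) atTop
      (𝓝 (max ((1 + lam) * (1 - S)) ((1 - S) / 2 + (1 - lam * S)))) := by
    have h1 : Tendsto (fun m => (1 + lam) * (1 - S) + p m) atTop
        (𝓝 ((1 + lam) * (1 - S))) := by
      simpa using (hplim.const_add ((1 + lam) * (1 - S)))
    have h2 : Tendsto (fun m => (1 - S) / 2 + supNorm (e (u m))) atTop
        (𝓝 ((1 - S) / 2 + (1 - lam * S))) := hsuplim.const_add _
    exact h1.max h2
  have hfinal := le_of_tendsto_of_tendsto' hsupsum hrhslim hineq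
  have hlamge1 : 1 ≤ lam := by
    rcases le_max_iff.1 hfinal with h | h
    · nlinarith [hS23, hSnonneg]
    · nlinarith [hS23, hSnonneg]
  have hlam1 : lam = 1 := le_antisymm hlamle1 hlamge1
  have hzx : ∀ k, z k = e x k := fun k => by rw [hzeq k, hlam1, one_mul]
  -- conclusion
  have hconc : Tendsto (fun m => ∑' k, e (u m) k * w k) atTop
      (𝓝 (∑' k, e x k * w k)) := by
    have h1 : Tendsto (fun m => ∑' k, e (u m) k * w k) atTop (𝓝 (∑' k, z k * w k)) := by
      refine tendsto_tsum_of_dominated_convergence (bound := fun k => |w k|) hwsum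
        (fun k => (hzlim k).mul_const (w k)) ?_
      filter_upwards with m k
      rw [Real.norm_eq_abs, abs_mul]
      calc |e (u m) k| * |w k| ≤ 1 * |w k| :=
            mul_le_mul_of_nonneg_right (hbu1 m k) (abs_nonneg _)
        _ = |w k| := one_mul _
    have h2 : (∑' k, z k * w k) = ∑' k, e x k * w k := tsum_congr fun k => by rw [hzx k]
    rwa [h2] at h1
  exact hconc




/-- Read's space `ℛ = (c₀, |||·|||)` is weakly locally uniformly rotund: if `x` and a
sequence `(y_m)` lie in the unit sphere of `ℛ` and `|||x + y_m||| → 2`, then `(y_m)`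
converges weakly to `x`. -/
theorem read_space_WLUR
    (r : ℕ → ℝ) (hrpos : ∀ n, 0 < r n) (hrsum : Summable r) (hr2 : ∑' n, r n ≤ 2)
    (v : ℕ → ℕ → ℝ) (hv1 : ∀ n, Summable fun k => |v n k|)
    (hv2 : ∀ n, ∑' k, |v n k| = 1)
    (hdense : ∀ w : ℕ → ℝ, (Summable fun k => |w k|) → ∑' k, |w k| = 1 →
      ∀ ε > 0, ∃ n, ∑' k, |w k - v n k| < ε)
    (X : Type*) [NormedAddCommGroup X] [NormedSpace ℝ X]
    (e : X →ₗ[ℝ] (ℕ → ℝ)) (hinj : Function.Injective e)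
    (hc0 : ∀ x, Tendsto (e x) atTop (𝓝 0))
    (hsurj : ∀ f : ℕ → ℝ, Tendsto f atTop (𝓝 0) → ∃ x, e x = f)
    (hnorm : ∀ x, ‖x‖ = readNorm r v (e x))
    (x : X) (hx : ‖x‖ = 1) (y : ℕ → X) (hy : ∀ m, ‖y m‖ = 1)
    (hsum : Tendsto (fun m => ‖x + y m‖) atTop (𝓝 2)) :
    ∀ f : StrongDual ℝ X, Tendsto (fun m => f (y m)) atTop (𝓝 (f x)) := by
  intro f
  obtain ⟨w, hwsum, hrep⟩ := dual_repr r hrpos hrsum hr2 v hv1 hv2 X e hinj hc0 hsurj hnorm f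
  have hkey := weak_key r hrpos hrsum hr2 v hv1 hv2 hdense X e hc0 hnorm x hx y hy hsum w hwsum
  have h1 : (fun m => f (y m)) = fun m => ∑' k, e (y m) k * w k :=
    funext fun m => hrep (y m)
  rw [h1, hrep x]
  exact hkey
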